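/- Let G be a finite connected graph and let l be an integer with 2^l ≤ |V(G)| < 2^{l+1}. For i ∈ {1, …, l} and v ∈ V(G) define M_i(v) := max{|E(G|_X)| + |∂_G X| : X ∈ 𝒞(G), v ∈ X, ⌊|V(G)|/2^{i+1}⌋ < |X| ≤ ⌊|V(G)|/2^i⌋} and m_i(v) := min{|∂_G X| : X ∈ 𝒞(G), v ∈ X, ⌊|V(G)|/2^{i+1}⌋ < |X| ≤ ⌊|V(G)|/2^i⌋}. Let U : ℝ → ℝ be a convex function with U(0) = 0 and U(−x) = U(x) for all x. Let a, b be two distinct vertices of G such that all the quantities M_i(a), m_i(a), M_i(b), m_i(b), i = 1, …, l, are defined (i.e., the corresponding collections of sets X are non-empty). Then inf{Σ_{e ∈ E(G)} U(∇_e φ) : φ : V(G) → ℝ, φ(a) − φ(b) = 1} ≥ inf{Σ_{i=1}^{l} M_i(a) · U(p_i m_i(a)/M_i(a)) + Σ_{i=1}^{l} M_i(b) · U(q_i m_i(b)/M_i(b)) : p_1, …, p_l ≥ 0, q_1, …, q_l ≥ 0, p_1 + … + p_l + q_1 + … + q_l = 1}. -/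

import Mathlib

section Ulemmas
variable {U : ℝ → ℝ} (hU : ConvexOn ℝ Set.univ U) (hU0 : U 0 = 0)
include hU hU0

theorem U_smul_le (hl0 : 0 ≤ lam) (hl1 : lam ≤ 1) (x : ℝ) : U (lam * x) ≤ lam * U x := by
  have hb : (0:ℝ) ≤ 1 - lam := by linarith
  have := hU.2 (Set.mem_univ x) (Set.mem_univ (0:ℝ)) hl0 hb (by ring)
  simpa [hU0] using this

theorem U_nonneg (hUeven : ∀ x, U (-x) = U x) (x : ℝ) : 0 ≤ U x := by
  have := hU.2 (Set.mem_univ x) (Set.mem_univ (-x)) (by norm_num : (0:ℝ) ≤ 1/2)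
    (by norm_num : (0:ℝ) ≤ 1/2) (by norm_num)
  simp only [smul_eq_mul] at this
  rw [show (1/2 : ℝ) * x + 1/2 * (-x) = 0 by ring, hU0, hUeven] at this
  linarith

theorem U_mono (hUeven : ∀ x, U (-x) = U x) {x y : ℝ} (hx : 0 ≤ x) (hxy : x ≤ y) :
    U x ≤ U y := by
  rcases eq_or_lt_of_le (hx.trans hxy) with h | h
  · rw [← h] at hxy ⊢; have : x = 0 := le_antisymm hxy hx; rw [this]
  · have hxy' : x / y ≤ 1 := by rw [div_le_one h]; exact hxy
    have h0 : 0 ≤ x / y := div_nonneg hx h.le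
    have := U_smul_le hU hU0 h0 hxy' y
    rw [div_mul_cancel₀ _ h.ne'] at this
    nlinarith [U_nonneg hU hU0 hUeven y]

theorem U_superadd {x y : ℝ} (hx : 0 ≤ x) (hy : 0 ≤ y) : U x + U y ≤ U (x + y) := by
  rcases eq_or_lt_of_le (by linarith : (0:ℝ) ≤ x + y) with h | h
  · have hx0 : x = 0 := by linarith
    have hy0 : y = 0 := by linarith
    simp [hx0, hy0, hU0]
  · have h1 := U_smul_le hU hU0 (div_nonneg hx h.le) (by rw [div_le_one h]; linarith) (x + y)
    have h2 := U_smul_le hU hU0 (div_nonneg hy h.le) (by rw [div_le_one h]; linarith) (x + y)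
    rw [div_mul_cancel₀ _ h.ne'] at h1 h2
    have hsum : x / (x+y) + y / (x+y) = 1 := by field_simp
    have h3 : x/(x+y) * U (x+y) + y/(x+y) * U (x+y) = U (x+y) := by
      rw [← add_mul, hsum, one_mul]
    linarith

theorem U_superadd_sum {α : Type*} (t : Finset α) (c : α → ℝ) (hc : ∀ i ∈ t, 0 ≤ c i) :
    ∑ i ∈ t, U (c i) ≤ U (∑ i ∈ t, c i) := by
  classical
  induction t using Finset.induction_on with
  | empty => simp [hU0]
  | insert a s hx ih =>
    rw [Finset.sum_insert hx, Finset.sum_insert hx]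
    have h1 : ∑ i ∈ s, U (c i) ≤ U (∑ i ∈ s, c i) := ih (fun i hi => hc i (Finset.mem_insert_of_mem hi))
    have h2 : U (c a) + U (∑ i ∈ s, c i) ≤ U (c a + ∑ i ∈ s, c i) :=
      U_superadd hU hU0 (hc a (Finset.mem_insert_self a s))
        (Finset.sum_nonneg fun i hi => hc i (Finset.mem_insert_of_mem hi))
    linarith

theorem U_jensen {α : Type*} (K : Finset α) (c : α → ℝ) (hc : ∀ i ∈ K, 0 ≤ c i)
    (M : ℝ) (hM : (K.card : ℝ) ≤ M) :
    M * U ((∑ i ∈ K, c i) / M) ≤ ∑ i ∈ K, U (c i) := by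
  rcases K.eq_empty_or_nonempty with rfl | hK
  · simp only [Finset.sum_empty, zero_div, hU0, mul_zero, le_refl]
  · have hcard : (0:ℝ) < K.card := by exact_mod_cast Finset.card_pos.2 hK
    have hMpos : (0:ℝ) < M := lt_of_lt_of_le hcard hM
    set S := ∑ i ∈ K, c i with hS
    have hjen : U (S / K.card) ≤ (∑ i ∈ K, U (c i)) / K.card := by
      have := hU.map_sum_le (t := K) (w := fun _ => (K.card : ℝ)⁻¹) (p := c)
        (fun i _ => by positivity) (by
          rw [Finset.sum_const, nsmul_eq_mul]
          field_simp) (fun i _ => Set.mem_univ _)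
      simp only [smul_eq_mul] at this
      have e1 : ∑ i ∈ K, (K.card:ℝ)⁻¹ * c i = S / K.card := by
        rw [← Finset.mul_sum, ← hS, div_eq_inv_mul]
      have e2 : ∑ i ∈ K, (K.card:ℝ)⁻¹ * U (c i) = (∑ i ∈ K, U (c i)) / K.card := by
        rw [← Finset.mul_sum, div_eq_inv_mul]
      rw [e1, e2] at this
      exact this
    have hSnn : 0 ≤ S := Finset.sum_nonneg hc
    have key : U (S / M) ≤ (K.card / M) * U (S / K.card) := by
      have := U_smul_le hU hU0 (lam := (K.card : ℝ) / M)
        (by positivity) (by rw [div_le_one hMpos]; exact hM) (S / K.card)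
      rw [show (K.card : ℝ) / M * (S / K.card) = S / M by field_simp] at this
      exact this
    have : M * U (S / M) ≤ M * ((K.card / M) * U (S / K.card)) := by
      apply mul_le_mul_of_nonneg_left key hMpos.le
    calc M * U (S/M) ≤ M * ((K.card / M) * U (S / K.card)) := this
      _ = K.card * U (S / K.card) := by field_simp
      _ ≤ K.card * ((∑ i ∈ K, U (c i)) / K.card) := by
          apply mul_le_mul_of_nonneg_left hjen hcard.le
      _ = ∑ i ∈ K, U (c i) := by field_simp

end Ulemmas


open Classical in
/-- `|∂_G X|`: the number of edges of `G` with exactly one endpoint in `X`. -/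
noncomputable def bdryCard {V : Type*} [Fintype V] (G : SimpleGraph V)
    (X : Finset V) : ℕ :=
  (Finset.univ.filter fun p : V × V => G.Adj p.1 p.2 ∧ p.1 ∈ X ∧ p.2 ∉ X).card

open Classical in
/-- `|E(G|_X)|`: the number of edges of `G` with both endpoints in `X`
(each unordered edge is counted twice as an ordered pair, whence the
division by `2`). -/
noncomputable def inEdgesCard {V : Type*} [Fintype V] (G : SimpleGraph V)
    (X : Finset V) : ℕ :=
  (Finset.univ.filter fun p : V × V => G.Adj p.1 p.2 ∧ p.1 ∈ X ∧ p.2 ∈ X).card / 2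

/-- `X ∈ 𝒞(G)`. -/
def memC {V : Type*} [Fintype V] (G : SimpleGraph V) (X : Finset V) : Prop :=
  X.Nonempty ∧ X ≠ Finset.univ ∧
    (SimpleGraph.induce (X : Set V) G).Connected ∧
    (SimpleGraph.induce ((X : Set V)ᶜ) G).Connected

/-- The collection of sets over which `M_i(v)` and `m_i(v)` are defined:
`X ∈ 𝒞(G)`, `v ∈ X`, `⌊|V(G)|/2^{i+1}⌋ < |X| ≤ ⌊|V(G)|/2^i⌋`. -/
def scaleFamily {V : Type*} [Fintype V] (G : SimpleGraph V) (v : V) (i : ℕ) :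
    Set (Finset V) :=
  {X | memC G X ∧ v ∈ X ∧
    Fintype.card V / 2 ^ (i + 1) < X.card ∧ X.card ≤ Fintype.card V / 2 ^ i}

/-- `M_i(v) = max {|E(G|_X)| + |∂_G X| : X ∈ scaleFamily}`. -/
noncomputable def Mscale {V : Type*} [Fintype V] (G : SimpleGraph V)
    (v : V) (i : ℕ) : ℕ :=
  sSup ((fun X => inEdgesCard G X + bdryCard G X) '' scaleFamily G v i)

/-- `m_i(v) = min {|∂_G X| : X ∈ scaleFamily}`. -/
noncomputable def mscale {V : Type*} [Fintype V] (G : SimpleGraph V)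
    (v : V) (i : ℕ) : ℕ :=
  sInf ((fun X => bdryCard G X) '' scaleFamily G v i)

open Classical in
/-- `∑_{e ∈ E(G)} U(∇_e φ)`; since `U` is even, this equals half the sum over
ordered pairs of adjacent vertices. -/
noncomputable def energyR {V : Type*} [Fintype V] (G : SimpleGraph V)
    (U : ℝ → ℝ) (φ : V → ℝ) : ℝ :=
  (1/2) * ∑ u : V, ∑ w : V, if G.Adj u w then U (φ u - φ w) else 0

section Reach
variable {V : Type*} (G : SimpleGraph V)

/-- one step inside `S` -/
def relIn (S : Finset V) (x y : V) : Prop := G.Adj x y ∧ x ∈ S ∧ y ∈ S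

/-- reachability inside `S` -/
def reachIn (S : Finset V) (u v : V) : Prop := Relation.ReflTransGen (relIn G S) u v

open Classical in
/-- connected component of `a` inside `S` -/
noncomputable def comp [Fintype V] (a : V) (S : Finset V) : Finset V :=
  Finset.univ.filter (fun v => reachIn G S a v)

variable {G}

theorem relIn_symm {S : Finset V} : Symmetric (relIn G S) := by
  intro x y ⟨h1, h2, h3⟩; exact ⟨h1.symm, h3, h2⟩

theorem reachIn_symm {S : Finset V} {u v : V} (h : reachIn G S u v) : reachIn G S v u :=
  letI : Std.Symm (relIn G S) := ⟨fun x y h => relIn_symm h⟩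
  (Relation.ReflTransGen.symmetric (r := relIn G S)).symm u v h

theorem reachIn_mono {S S' : Finset V} (hSS : S ⊆ S') {u v : V} (h : reachIn G S u v) :
    reachIn G S' u v :=
  Relation.ReflTransGen.mono (p := relIn G S') (fun x y ⟨h1, h2, h3⟩ => ⟨h1, hSS h2, hSS h3⟩) u v h

variable [Fintype V]

theorem mem_comp {a v : V} {S : Finset V} : v ∈ comp G a S ↔ reachIn G S a v := by
  classical
  simp [comp]

theorem self_mem_comp {a : V} {S : Finset V} : a ∈ comp G a S :=
  mem_comp.2 Relation.ReflTransGen.refl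

theorem comp_subset {a : V} {S : Finset V} (ha : a ∈ S) : comp G a S ⊆ S := by
  intro v hv
  have h := reachIn_symm (mem_comp.1 hv)
  cases h.cases_head with
  | inl h' => exact h' ▸ ha
  | inr h' => obtain ⟨c, hc, _⟩ := h'; exact hc.2.1

theorem comp_mono {a : V} {S S' : Finset V} (h : S ⊆ S') : comp G a S ⊆ comp G a S' :=
  fun _ hv => mem_comp.2 (reachIn_mono h (mem_comp.1 hv))

theorem reachIn_comp {a v : V} {S : Finset V} (h : reachIn G S a v) :
    reachIn G (comp G a S) a v := by
  induction h with
  | refl => exact Relation.ReflTransGen.refl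
  | tail h1 h2 ih =>
    exact ih.tail ⟨h2.1, mem_comp.2 h1, mem_comp.2 (h1.tail h2)⟩

theorem comp_extend {a u v : V} {S : Finset V} (hu : u ∈ comp G a S) (hadj : G.Adj u v)
    (hu' : u ∈ S) (hv : v ∈ S) : v ∈ comp G a S :=
  mem_comp.2 ((mem_comp.1 hu).tail ⟨hadj, hu', hv⟩)

theorem reachIn_induce_reachable {T : Finset V} {x y : V} (h : reachIn G T x y)
    (hx : x ∈ T) (hy : y ∈ T) :
    (G.induce (↑T : Set V)).Reachable ⟨x, by simpa using hx⟩ ⟨y, by simpa using hy⟩ := by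
  induction h with
  | refl => rfl
  | tail h1 h2 ih =>
    have hmid := h2.2.1
    have := ih hmid
    refine this.trans (SimpleGraph.Adj.reachable ?_)
    exact h2.1

theorem connected_induce_of_reach {T : Finset V} {a : V} (ha : a ∈ T)
    (h : ∀ v ∈ T, reachIn G T a v) : (G.induce (↑T : Set V)).Connected := by
  rw [SimpleGraph.connected_iff]
  constructor
  · rintro ⟨u, hu⟩ ⟨v, hv⟩
    have hu' : u ∈ T := by simpa using hu
    have hv' : v ∈ T := by simpa using hv
    exact (reachIn_induce_reachable (reachIn_symm (h u hu')) hu' ha).trans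
      (reachIn_induce_reachable (h v hv') ha hv')
  · exact ⟨⟨a, by simpa using ha⟩⟩

theorem reach_back {a v : V} {S : Finset V} (hv : v ∈ comp G a S) :
    reachIn G (comp G a S) v a :=
  reachIn_symm (reachIn_comp (mem_comp.1 hv))

end Reach

section Fill
variable {V : Type*} [Fintype V] [DecidableEq V] {G : SimpleGraph V}

theorem reach_compl_fill (hG : G.Connected) {S : Finset V} {a b v : V}
    (ha : a ∈ S) (hb : b ∉ S) (hv : v ∉ comp G b (comp G a S)ᶜ) :
    reachIn G (comp G b (comp G a S)ᶜ)ᶜ v a := by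
  set X := comp G a S with hX
  set B := comp G b Xᶜ with hB
  have hbX : b ∈ Xᶜ := Finset.mem_compl.2 (fun h => hb (comp_subset ha h))
  have hXB : X ⊆ Bᶜ := by
    intro x hx
    refine Finset.mem_compl.2 (fun hxB => ?_)
    exact (Finset.mem_compl.1 (comp_subset hbX hxB)) hx
  have key : ∀ w, Relation.ReflTransGen G.Adj a w → w ∉ B → reachIn G Bᶜ w a := by
    intro w hw
    induction hw with
    | refl => intro _; exact Relation.ReflTransGen.refl
    | @tail u w' h1 hadj ih =>
      intro hwB
      by_cases hu : u ∈ B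
      · have hwX : w' ∈ X := by
          by_contra hwX
          exact hwB (comp_extend hu hadj (comp_subset hbX hu) (Finset.mem_compl.2 hwX))
        exact reachIn_mono hXB (reach_back hwX)
      · exact Relation.ReflTransGen.head
          ⟨hadj.symm, Finset.mem_compl.2 hwB, Finset.mem_compl.2 hu⟩ (ih hu)
  exact key v ((SimpleGraph.reachable_iff_reflTransGen _ _).1 (hG.preconnected a v)) hv

theorem memC_pair (hG : G.Connected) {S : Finset V} {a b : V} (ha : a ∈ S) (hb : b ∉ S) :
    memC G (comp G b (comp G a S)ᶜ)ᶜ ∧ memC G (comp G b (comp G a S)ᶜ) := by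
  set X := comp G a S with hX
  set B := comp G b Xᶜ with hB
  have hbX : b ∈ Xᶜ := Finset.mem_compl.2 (fun h => hb (comp_subset ha h))
  have hXB : X ⊆ Bᶜ := by
    intro x hx
    refine Finset.mem_compl.2 (fun hxB => ?_)
    exact (Finset.mem_compl.1 (comp_subset hbX hxB)) hx
  have haB : a ∈ Bᶜ := hXB self_mem_comp
  have hbB : b ∈ B := self_mem_comp
  have hreach : ∀ v ∈ Bᶜ, reachIn G Bᶜ a v := fun v hv =>
    reachIn_symm (reach_compl_fill hG ha hb (Finset.mem_compl.1 hv))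
  have hconnA : (G.induce (↑(Bᶜ) : Set V)).Connected :=
    connected_induce_of_reach haB hreach
  have hconnB : (G.induce (↑B : Set V)).Connected :=
    connected_induce_of_reach hbB (fun v hv => reachIn_comp (mem_comp.1 hv))
  have hcoe1 : ((↑(Bᶜ) : Set V)ᶜ) = (↑B : Set V) := by
    simp [Finset.coe_compl]
  have hcoe2 : ((↑B : Set V)ᶜ) = (↑(Bᶜ) : Set V) := by
    simp [Finset.coe_compl]
  refine ⟨⟨⟨a, haB⟩, fun h => ?_, hconnA, by rw [hcoe1]; exact hconnB⟩,
          ⟨⟨b, hbB⟩, fun h => ?_, hconnB, by rw [hcoe2]; exact hconnA⟩⟩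
  · have : b ∈ Bᶜ := h ▸ Finset.mem_univ b
    exact Finset.mem_compl.1 this hbB
  · have : a ∈ B := h ▸ Finset.mem_univ a
    exact Finset.mem_compl.1 haB this

end Fill

section Levels
open Finset
variable {V : Type*} [Fintype V] [DecidableEq V] (G : SimpleGraph V)

/-- super-level set -/
noncomputable def lvl (φ : V → ℝ) (t : ℝ) : Finset V := Finset.univ.filter (fun v => t < φ v)

/-- the `b`-side set at level `t` -/
noncomputable def BB (φ : V → ℝ) (a b : V) (t : ℝ) : Finset V :=
  comp G b (comp G a (lvl φ t))ᶜ

open Classical in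
/-- oriented boundary pairs -/
noncomputable def obd (Y : Finset V) : Finset (V × V) :=
  Finset.univ.filter (fun p => G.Adj p.1 p.2 ∧ p.1 ∈ Y ∧ p.2 ∉ Y)

variable {G}
variable {φ : V → ℝ} {a b : V} {t t' : ℝ}

theorem a_mem_lvl (hta : t < φ a) : a ∈ lvl φ t := by simp [lvl, hta]

theorem b_not_mem_lvl (hbt : φ b ≤ t) : b ∉ lvl φ t := by simp [lvl]; exact hbt

theorem mem_lvl_iff {v : V} : v ∈ lvl φ t ↔ t < φ v := by simp [lvl]

theorem b_mem_BB : b ∈ BB G φ a b t := self_mem_comp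

theorem a_mem_BBc (hta : t < φ a) (hbt : φ b ≤ t) : a ∈ (BB G φ a b t)ᶜ := by
  have hbX : b ∈ (comp G a (lvl φ t))ᶜ :=
    Finset.mem_compl.2 (fun h => (b_not_mem_lvl hbt) (comp_subset (a_mem_lvl hta) h))
  refine Finset.mem_compl.2 (fun haB => ?_)
  exact Finset.mem_compl.1 (comp_subset hbX haB) self_mem_comp

theorem BB_memC (hG : G.Connected) (hta : t < φ a) (hbt : φ b ≤ t) :
    memC G (BB G φ a b t) :=
  (memC_pair hG (a_mem_lvl hta) (b_not_mem_lvl hbt)).2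

theorem BBc_memC (hG : G.Connected) (hta : t < φ a) (hbt : φ b ≤ t) :
    memC G (BB G φ a b t)ᶜ :=
  (memC_pair hG (a_mem_lvl hta) (b_not_mem_lvl hbt)).1

theorem BB_mono (htt : t ≤ t') : BB G φ a b t ⊆ BB G φ a b t' := by
  apply comp_mono
  apply Finset.compl_subset_compl.2
  apply comp_mono
  intro v hv
  exact mem_lvl_iff.2 (lt_of_le_of_lt htt (mem_lvl_iff.1 hv))

theorem obd_adj {Y : Finset V} {p : V × V} (hp : p ∈ obd G Y) :
    G.Adj p.1 p.2 ∧ p.1 ∈ Y ∧ p.2 ∉ Y := by simpa [obd] using hp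

theorem obd_BB (hta : t < φ a) (hbt : φ b ≤ t) {p : V × V}
    (hp : p ∈ obd G (BB G φ a b t)) : φ p.1 ≤ t ∧ t < φ p.2 := by
  classical
  obtain ⟨hadj, hp1, hp2⟩ := by simpa [obd] using hp
  set X := comp G a (lvl φ t) with hX
  have hbX : b ∈ Xᶜ :=
    Finset.mem_compl.2 (fun h => (b_not_mem_lvl hbt) (comp_subset (a_mem_lvl hta) h))
  have hp1X : p.1 ∈ Xᶜ := comp_subset hbX hp1
  have hp2X : p.2 ∈ X := by
    by_contra h
    exact hp2 (comp_extend hp1 hadj hp1X (Finset.mem_compl.2 h))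
  constructor
  · by_contra h
    push_neg at h
    exact Finset.mem_compl.1 hp1X
      (comp_extend hp2X hadj.symm (comp_subset (a_mem_lvl hta) hp2X) (mem_lvl_iff.2 h))
  · exact mem_lvl_iff.1 (comp_subset (a_mem_lvl hta) hp2X)

theorem obd_BBc (hta : t < φ a) (hbt : φ b ≤ t) {p : V × V}
    (hp : p ∈ obd G (BB G φ a b t)ᶜ) : φ p.2 ≤ t ∧ t < φ p.1 := by
  classical
  have h := obd_adj hp
  have hswap : (p.2, p.1) ∈ obd G (BB G φ a b t) := by
    simp only [obd, Finset.mem_filter, Finset.mem_univ, true_and]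
    exact ⟨h.1.symm, by simpa using h.2.2, fun hh => (Finset.mem_compl.1 h.2.1) hh⟩
  exact obd_BB hta hbt hswap

theorem obd_card (Y : Finset V) : (obd G Y).card = bdryCard G Y := by
  classical
  unfold obd bdryCard
  congr 1
  congr!

end Levels

/-- interval sum bound -/
theorem sum_delta_le {s : ℕ → ℝ} (hmono : Monotone s) {A B : ℝ} :
    ∀ (k : ℕ) (R : Finset ℕ), R ⊆ Finset.range k →
      (∀ r ∈ R, A ≤ s r ∧ s (r + 1) ≤ B) →
      ∑ r ∈ R, (s (r + 1) - s r) ≤ max (min B (s k) - A) 0 := by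
  intro k
  induction k with
  | zero =>
    intro R hR _
    simp [Finset.subset_empty.1 (by simpa using hR)]
  | succ k ih =>
    intro R hR hmem
    have hR' : R.erase k ⊆ Finset.range k := by
      intro r hr
      have h1 := Finset.mem_erase.1 hr
      have h2 := hR (Finset.mem_of_mem_erase hr)
      simp only [Finset.mem_range] at h2 ⊢
      omega
    have ih' := ih (R.erase k) hR' (fun r hr => hmem r (Finset.mem_of_mem_erase hr))
    by_cases hk : k ∈ R
    · have hks := hmem k hk
      have hmin : min B (s k) = s k := min_eq_right (le_trans (hmono (Nat.le_succ k)) hks.2)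
      rw [← Finset.sum_erase_add R _ hk]
      have h1 : max (min B (s k) - A) 0 = s k - A := by
        rw [hmin]; exact max_eq_left (by linarith [hks.1])
      have hmin' : min B (s (k + 1)) = s (k + 1) := min_eq_right hks.2
      have : s (k+1) - A ≤ max (min B (s (k+1)) - A) 0 := by
        rw [hmin']; exact le_max_left _ _
      rw [h1] at ih'
      linarith
    · rw [Finset.erase_eq_of_notMem hk] at ih'
      refine le_trans ih' (max_le_max ?_ le_rfl)
      have := hmono (Nat.le_succ k)
      simp only [sub_le_sub_iff_right]
      exact min_le_min le_rfl this

open Classical in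
theorem inEdges_count {V : Type*} [Fintype V] (G : SimpleGraph V) (Y : Finset V)
    (ι : V → ℕ) (hι : Function.Injective ι) :
    (Finset.univ.filter
      (fun p : V × V => G.Adj p.1 p.2 ∧ p.1 ∈ Y ∧ p.2 ∈ Y ∧ ι p.1 < ι p.2)).card
      = inEdgesCard G Y := by
  classical
  set T := Finset.univ.filter (fun p : V × V => G.Adj p.1 p.2 ∧ p.1 ∈ Y ∧ p.2 ∈ Y) with hT
  set T1 := Finset.univ.filter
      (fun p : V × V => G.Adj p.1 p.2 ∧ p.1 ∈ Y ∧ p.2 ∈ Y ∧ ι p.1 < ι p.2) with hT1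
  set T2 := Finset.univ.filter
      (fun p : V × V => G.Adj p.1 p.2 ∧ p.1 ∈ Y ∧ p.2 ∈ Y ∧ ι p.2 < ι p.1) with hT2
  have hunion : T = T1 ∪ T2 := by
    ext p
    simp only [hT, hT1, hT2, Finset.mem_union, Finset.mem_filter, Finset.mem_univ, true_and]
    constructor
    · rintro ⟨hadj, h1, h2⟩
      have hne : ι p.1 ≠ ι p.2 := fun h => hadj.ne (hι h)
      rcases lt_or_gt_of_ne hne with h | h
      · exact Or.inl ⟨hadj, h1, h2, h⟩
      · exact Or.inr ⟨hadj, h1, h2, h⟩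
    · rintro (⟨hadj, h1, h2, _⟩ | ⟨hadj, h1, h2, _⟩) <;> exact ⟨hadj, h1, h2⟩
  have hdisj : Disjoint T1 T2 := by
    rw [Finset.disjoint_left]
    intro p hp1 hp2
    simp only [hT1, hT2, Finset.mem_filter] at hp1 hp2
    exact absurd hp2.2.2.2.2 (not_lt.2 (le_of_lt hp1.2.2.2.2))
  have hcardeq : T2.card = T1.card := by
    apply Finset.card_bij (fun p _ => Prod.swap p)
    · intro p hp
      simp only [hT1, hT2, Finset.mem_filter, Finset.mem_univ, true_and] at hp ⊢
      exact ⟨hp.1.symm, hp.2.2.1, hp.2.1, hp.2.2.2⟩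
    · intro p hp q hq h
      exact Prod.swap_injective h
    · intro p hp
      refine ⟨Prod.swap p, ?_, by simp⟩
      simp only [hT1, hT2, Finset.mem_filter, Finset.mem_univ, true_and] at hp ⊢
      exact ⟨hp.1.symm, hp.2.2.1, hp.2.1, hp.2.2.2⟩
  have htot : T.card = 2 * T1.card := by
    rw [hunion, Finset.card_union_of_disjoint hdisj, hcardeq]
    ring
  have : inEdgesCard G Y = T.card / 2 := by
    unfold inEdgesCard
    congr 1
  rw [this, htot]
  omega
set_option maxHeartbeats 1000000 in
/-- **Energy estimate via isoperimetry.**  Let `G` be a finite connected graph,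
`2^l ≤ |V(G)| < 2^{l+1}`, `U : ℝ → ℝ` even convex with `U(0) = 0`, and let
`a ≠ b` be vertices such that all `M_i(a), m_i(a), M_i(b), m_i(b)`,
`i = 1, …, l`, are defined.  Then
`inf {∑_e U(∇_e φ) : φ(a) - φ(b) = 1}` is at least
`inf {∑_i M_i(a) U(p_i m_i(a)/M_i(a)) + ∑_i M_i(b) U(q_i m_i(b)/M_i(b))}`
over `p_i, q_i ≥ 0` with total sum `1`. -/
theorem energy_estimate_via_isoperimetry
    {V : Type*} [Fintype V] (G : SimpleGraph V) (hG : G.Connected)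
    (l : ℕ) (hl : 2 ^ l ≤ Fintype.card V) (hl' : Fintype.card V < 2 ^ (l + 1))
    (U : ℝ → ℝ) (hU : ConvexOn ℝ Set.univ U) (hU0 : U 0 = 0)
    (hUeven : ∀ x, U (-x) = U x)
    (a b : V) (hab : a ≠ b)
    (hdef : ∀ i ∈ Finset.Icc 1 l,
      (scaleFamily G a i).Nonempty ∧ (scaleFamily G b i).Nonempty)
    (φ : V → ℝ) (hφ : φ a - φ b = 1) :
    sInf {r : ℝ | ∃ p q : ℕ → ℝ, (∀ i, 0 ≤ p i) ∧ (∀ i, 0 ≤ q i) ∧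
        (∑ i ∈ Finset.Icc 1 l, (p i + q i)) = 1 ∧
        r = ∑ i ∈ Finset.Icc 1 l,
          ((Mscale G a i : ℝ) * U (p i * (mscale G a i : ℝ) / (Mscale G a i : ℝ)) +
           (Mscale G b i : ℝ) * U (q i * (mscale G b i : ℝ) / (Mscale G b i : ℝ)))}
      ≤ energyR G U φ := by
  classical
  set n := Fintype.card V with hn
  have hn2 : (2:ℕ) ≤ n := Fintype.one_lt_card_iff_nontrivial.2 ⟨a, b, hab⟩
  have hl1 : 1 ≤ l := by
    by_contra h
    push_neg at h
    have : l = 0 := by omega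
    subst this
    simp at hl'
    omega
  have hU0' : ∀ x : ℝ, 0 ≤ U x := U_nonneg hU hU0 hUeven
  have hUabs : ∀ x : ℝ, U |x| = U x := by
    intro x
    rcases abs_cases x with ⟨h, _⟩ | ⟨h, _⟩
    · rw [h]
    · rw [h, hUeven]
  -- ===== grid =====
  set W : Finset ℝ := (Finset.univ.image φ).filter (fun x => φ b ≤ x ∧ x ≤ φ a) with hW
  have hbW : φ b ∈ W := by
    simp only [hW, Finset.mem_filter, Finset.mem_image]
    exact ⟨⟨b, Finset.mem_univ b, rfl⟩, le_refl _, by linarith⟩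
  have haW : φ a ∈ W := by
    simp only [hW, Finset.mem_filter, Finset.mem_image]
    exact ⟨⟨a, Finset.mem_univ a, rfl⟩, by linarith, le_refl _⟩
  have hWb : ∀ x ∈ W, φ b ≤ x ∧ x ≤ φ a := by
    intro x hx
    simp only [hW, Finset.mem_filter] at hx
    exact hx.2
  have hWpos : 0 < W.card := Finset.card_pos.2 ⟨_, hbW⟩
  set k := W.card - 1 with hk
  have hklt : k < W.card := by omega
  set σ := W.orderIsoOfFin rfl with hσ
  set s : ℕ → ℝ := fun r => (σ ⟨min r k, lt_of_le_of_lt (min_le_right _ _) hklt⟩ : ℝ) with hs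
  have hsW : ∀ r, s r ∈ W := fun r => (σ _).2
  have hs_le : ∀ r r', r ≤ r' → s r ≤ s r' := by
    intro r r' h
    exact Subtype.coe_le_coe.2 (σ.monotone (Fin.mk_le_mk.2 (min_le_min h le_rfl)))
  have horder : ∀ r r', r ≤ k → r' ≤ k → (s r ≤ s r' ↔ r ≤ r') := by
    intro r r' hr hr'
    simp only [hs]
    rw [Subtype.coe_le_coe, σ.le_iff_le, Fin.mk_le_mk]
    rw [min_eq_left hr, min_eq_left hr']
  have hs_grid : ∀ x ∈ W, ∃ j, j ≤ k ∧ s j = x := by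
    intro x hx
    set j := σ.symm ⟨x, hx⟩ with hj
    refine ⟨j.val, by omega, ?_⟩
    have hidx : (⟨min j.val k, lt_of_le_of_lt (min_le_right _ _) hklt⟩ : Fin W.card) = j := by
      apply Fin.ext
      simpa using min_eq_left (by omega : j.val ≤ k)
    have h2 := congrArg (fun (i : Fin W.card) => ((σ i : {x // x ∈ W}) : ℝ)) hidx
    refine h2.trans ?_
    rw [hj]
    simp
  have hs0 : s 0 = φ b := by
    obtain ⟨j, hj, hsj⟩ := hs_grid _ hbW
    refine le_antisymm ?_ ((hWb _ (hsW 0)).1)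
    rw [← hsj]
    exact hs_le 0 j (Nat.zero_le j)
  have hsk : s k = φ a := by
    obtain ⟨j, hj, hsj⟩ := hs_grid _ haW
    refine le_antisymm ((hWb _ (hsW k)).2) ?_
    rw [← hsj]
    exact (horder j k hj le_rfl).2 hj
  have hs_next : ∀ r, r < k → ∀ x : ℝ, (∃ v, φ v = x) → s r < x → s (r+1) ≤ x := by
    intro r hr x hex hlt
    by_cases hxa : x ≤ φ a
    · have hxW : x ∈ W := by
        obtain ⟨v, rfl⟩ := hex
        simp only [hW, Finset.mem_filter, Finset.mem_image]
        refine ⟨⟨v, Finset.mem_univ v, rfl⟩, ?_, hxa⟩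
        calc φ b = s 0 := hs0.symm
          _ ≤ s r := hs_le 0 r (Nat.zero_le r)
          _ ≤ φ v := le_of_lt hlt
      obtain ⟨j, hj, hsj⟩ := hs_grid _ hxW
      rw [← hsj] at hlt ⊢
      have : ¬ (j ≤ r) := fun h => absurd ((horder j r hj (le_of_lt hr)).2 h) (not_le_of_gt hlt)
      exact (horder (r+1) j (by omega) hj).2 (by omega)
    · calc s (r+1) ≤ s k := hs_le _ _ (by omega)
        _ = φ a := hsk
        _ ≤ x := by linarith
  set δ : ℕ → ℝ := fun r => s (r+1) - s r with hδ
  have hδ0 : ∀ r, 0 ≤ δ r := fun r => by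
    simp only [hδ, sub_nonneg]; exact hs_le r (r+1) (by omega)
  have htele : ∑ r ∈ Finset.range k, δ r = 1 := by
    simp only [hδ]
    rw [Finset.sum_range_sub (f := s), hs0, hsk]
    linarith
  -- ===== sets and scales =====
  set Bf : ℕ → Finset V := fun r => BB G φ a b (s r) with hBf
  set Z : ℕ → Finset V := fun r => if (Bf r)ᶜ.card ≤ n / 2 then (Bf r)ᶜ else Bf r with hZdef
  set sd : ℕ → Bool := fun r => decide ((Bf r)ᶜ.card ≤ n / 2) with hsd
  set sc : ℕ → ℕ := fun r => Nat.findGreatest (fun j => (Z r).card ≤ n / 2 ^ j) l with hsc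
  have hrange : ∀ r ∈ Finset.range k, φ b ≤ s r ∧ s r < φ a := by
    intro r hr
    rw [Finset.mem_range] at hr
    constructor
    · rw [← hs0]; exact hs_le 0 r (Nat.zero_le r)
    · rw [← hsk]
      rcases lt_or_ge (s r) (s k) with h | h
      · exact h
      · exfalso
        have := (horder k r le_rfl (le_of_lt hr)).1 h
        omega
  have hZtrue : ∀ r, sd r = true → Z r = (Bf r)ᶜ := by
    intro r h
    simp only [hsd, decide_eq_true_eq] at h
    simp only [hZdef, if_pos h]
  have hZfalse : ∀ r, sd r = false → Z r = Bf r := by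
    intro r h
    simp only [hsd, decide_eq_false_iff_not] at h
    simp only [hZdef, if_neg h]
  have hvZ : ∀ r ∈ Finset.range k, (if sd r then a else b) ∈ Z r := by
    intro r hr
    obtain ⟨h1, h2⟩ := hrange r hr
    cases hb : sd r with
    | true => rw [hZtrue r hb]; simpa using a_mem_BBc h2 h1
    | false => rw [hZfalse r hb]; simpa using b_mem_BB
  have hZcard : ∀ r, 1 ≤ (Z r).card ∧ (Z r).card ≤ n / 2 → True := fun _ _ => trivial
  have hZhalf : ∀ r, (Z r).card ≤ n / 2 := by
    intro r
    by_cases h : (Bf r)ᶜ.card ≤ n / 2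
    · simp only [hZdef, if_pos h]; exact h
    · simp only [hZdef, if_neg h]
      have h1 : (Bf r)ᶜ.card = n - (Bf r).card := by
        rw [Finset.card_compl]
      have h2 : (Bf r).card ≤ n := Finset.card_le_univ _
      omega
  have hZmem : ∀ r ∈ Finset.range k, Z r ∈ scaleFamily G (if sd r then a else b) (sc r) := by
    intro r hr
    obtain ⟨h1, h2⟩ := hrange r hr
    have hpos : 0 < (Z r).card := Finset.card_pos.2 ⟨_, hvZ r hr⟩
    have hhalf := hZhalf r
    have hmemC : memC G (Z r) := by
      cases hb : sd r with
      | true => rw [hZtrue r hb]; exact BBc_memC hG h2 h1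
      | false => rw [hZfalse r hb]; exact BB_memC hG h2 h1
    have h1i : 1 ≤ sc r := Nat.le_findGreatest hl1 (by simpa using hhalf)
    have hup : (Z r).card ≤ n / 2 ^ (sc r) :=
      Nat.findGreatest_of_ne_zero (P := fun j => (Z r).card ≤ n / 2 ^ j) (n := l)
        (m := sc r) rfl (by omega)
    have hlow : n / 2 ^ (sc r + 1) < (Z r).card := by
      rcases eq_or_lt_of_le (Nat.findGreatest_le (P := fun j => (Z r).card ≤ n / 2 ^ j) l)
        with he | hlt
      · rw [show sc r = l from he]
        rw [Nat.div_eq_of_lt hl']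
        exact hpos
      · have hsceq : sc r = Nat.findGreatest (fun j => (Z r).card ≤ n / 2 ^ j) l := rfl
        have := Nat.findGreatest_is_greatest
          (P := fun j => (Z r).card ≤ n / 2 ^ j) (n := l) (k := sc r + 1)
          (by omega) (by omega)
        omega
    exact ⟨hmemC, hvZ r hr, hlow, hup⟩
  have hsc_mem : ∀ r ∈ Finset.range k, sc r ∈ Finset.Icc 1 l := by
    intro r hr
    have hpos : 0 < (Z r).card := Finset.card_pos.2 ⟨_, hvZ r hr⟩
    have hP1 : (Z r).card ≤ n / 2 ^ 1 := by simpa using hZhalf r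
    refine Finset.mem_Icc.2 ⟨Nat.le_findGreatest hl1 hP1, Nat.findGreatest_le l⟩
  have hZmono : ∀ r r', r ≤ r' → Bf r ⊆ Bf r' := by
    intro r r' h
    exact BB_mono (hs_le r r' h)
  have hobd_budget : ∀ r ∈ Finset.range k, ∀ p ∈ obd G (Z r),
      min (φ p.1) (φ p.2) ≤ s r ∧ s (r+1) ≤ max (φ p.1) (φ p.2) := by
    intro r hr p hp
    obtain ⟨h1, h2⟩ := hrange r hr
    rw [Finset.mem_range] at hr
    cases hb : sd r with
    | true =>
      rw [hZtrue r hb] at hp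
      obtain ⟨hp2, hp1⟩ := obd_BBc h2 h1 hp
      exact ⟨le_trans (min_le_right _ _) hp2,
        le_trans (hs_next r hr (φ p.1) ⟨p.1, rfl⟩ hp1) (le_max_left _ _)⟩
    | false =>
      rw [hZfalse r hb] at hp
      obtain ⟨hp1, hp2⟩ := obd_BB h2 h1 hp
      exact ⟨le_trans (min_le_left _ _) hp1,
        le_trans (hs_next r hr (φ p.2) ⟨p.2, rfl⟩ hp2) (le_max_right _ _)⟩
  -- ===== pair quantities =====
  set P : Finset (V × V) := Finset.univ.filter (fun p => G.Adj p.1 p.2) with hP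
  set fib : V × V → Bool → ℕ → Finset ℕ := fun p v i =>
    (Finset.range k).filter (fun r => p ∈ obd G (Z r) ∧ sd r = v ∧ sc r = i) with hfib
  set cc : V × V → Bool → ℕ → ℝ := fun p v i => ∑ r ∈ fib p v i, δ r with hcc
  set tp : V × V → ℝ := fun p =>
    ∑ r ∈ (Finset.range k).filter (fun r => p ∈ obd G (Z r)), δ r with htp
  set dd : Bool → ℕ → ℝ := fun v i =>
    ∑ r ∈ (Finset.range k).filter (fun r => sd r = v ∧ sc r = i), δ r with hdd
  have hcc0 : ∀ p v i, 0 ≤ cc p v i := fun p v i =>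
    Finset.sum_nonneg (fun r _ => hδ0 r)
  have hdd0 : ∀ v i, 0 ≤ dd v i := fun v i =>
    Finset.sum_nonneg (fun r _ => hδ0 r)
  have htp0 : ∀ p, 0 ≤ tp p := fun p => Finset.sum_nonneg (fun r _ => hδ0 r)
  have hmonos : Monotone s := fun r r' h => hs_le r r' h
  have hbudget : ∀ p : V × V, tp p + tp (Prod.swap p) ≤ |φ p.1 - φ p.2| := by
    intro p
    set R1 := (Finset.range k).filter (fun r => p ∈ obd G (Z r)) with hR1
    set R2 := (Finset.range k).filter (fun r => Prod.swap p ∈ obd G (Z r)) with hR2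
    have hdisj : Disjoint R1 R2 := by
      rw [Finset.disjoint_left]
      intro r hr1 hr2
      rw [hR1, Finset.mem_filter] at hr1
      rw [hR2, Finset.mem_filter] at hr2
      exact (obd_adj hr2.2).2.2 (obd_adj hr1.2).2.1
    have hsum : tp p + tp (Prod.swap p) = ∑ r ∈ R1 ∪ R2, δ r := by
      rw [Finset.sum_union hdisj]
    rw [hsum]
    have hkey := sum_delta_le hmonos (A := min (φ p.1) (φ p.2)) (B := max (φ p.1) (φ p.2))
      k (R1 ∪ R2) ?_ ?_
    · refine le_trans hkey (max_le ?_ (abs_nonneg _))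
      have h1 : φ p.1 ⊔ φ p.2 - φ p.1 ⊓ φ p.2 = |φ p.1 - φ p.2| := by
        rw [max_sub_min_eq_abs, abs_sub_comm]
      have h2 := min_le_left (φ p.1 ⊔ φ p.2) (s k)
      linarith
    · intro r hrm
      rcases Finset.mem_union.1 hrm with h | h
      · exact Finset.mem_filter.1 h |>.1
      · exact Finset.mem_filter.1 h |>.1
    · intro r hrm
      rcases Finset.mem_union.1 hrm with h | h
      · obtain ⟨hrk, hpo⟩ := Finset.mem_filter.1 h
        exact hobd_budget r hrk p hpo
      · obtain ⟨hrk, hpo⟩ := Finset.mem_filter.1 h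
        obtain ⟨ha1, ha2⟩ := hobd_budget r hrk _ hpo
        simp only [Prod.fst_swap, Prod.snd_swap] at ha1 ha2
        constructor
        · rw [min_comm] at ha1; exact ha1
        · rw [max_comm] at ha2; exact ha2
  have hfe : ∀ (R : Finset ℕ) (v : Bool) (i : ℕ),
      R.filter (fun r => (sd r, sc r) = (v, i)) = R.filter (fun r => sd r = v ∧ sc r = i) := by
    intro R v i
    apply Finset.filter_congr
    intro r _
    simp [Prod.ext_iff]
  have hfibsplit : ∀ (p : V × V) (i : ℕ),
      ((Finset.range k).filter (fun r => p ∈ obd G (Z r))).filter (fun r => sc r = i)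
        = fib p true i ∪ fib p false i := by
    intro p i
    rw [Finset.filter_filter, hfib, ← Finset.filter_or]
    apply Finset.filter_congr
    intro r _
    cases hsdr : sd r <;> simp [hsdr]
  have hfibdisj : ∀ (p : V × V) (i : ℕ), Disjoint (fib p true i) (fib p false i) := by
    intro p i
    rw [Finset.disjoint_left]
    intro r h1 h2
    rw [hfib, Finset.mem_filter] at h1 h2
    rw [h1.2.2.1] at h2
    exact Bool.noConfusion h2.2.2.1
  have hdecomp2 : ∀ p, tp p = ∑ i ∈ Finset.Icc 1 l, (cc p true i + cc p false i) := by
    intro p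
    have hmaps : ∀ r ∈ (Finset.range k).filter (fun r => p ∈ obd G (Z r)),
        sc r ∈ Finset.Icc 1 l := fun r hr => hsc_mem r (Finset.mem_filter.1 hr).1
    have hfw := Finset.sum_fiberwise_of_maps_to hmaps δ
    calc tp p = ∑ i ∈ Finset.Icc 1 l,
          ∑ r ∈ ((Finset.range k).filter (fun r => p ∈ obd G (Z r))).filter
            (fun r => sc r = i), δ r := hfw.symm
      _ = ∑ i ∈ Finset.Icc 1 l, (cc p true i + cc p false i) := by
          apply Finset.sum_congr rfl
          intro i _
          rw [hfibsplit p i, Finset.sum_union (hfibdisj p i)]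
  have hdecomp : ∀ p, tp p = ∑ v : Bool, ∑ i ∈ Finset.Icc 1 l, cc p v i := by
    intro p
    rw [Fintype.sum_bool, hdecomp2 p, Finset.sum_add_distrib]
  have hsum1 : ∑ i ∈ Finset.Icc 1 l, (dd true i + dd false i) = 1 := by
    have hfw := Finset.sum_fiberwise_of_maps_to hsc_mem δ
    rw [htele] at hfw
    rw [← hfw]
    apply Finset.sum_congr rfl
    intro i _
    have hsplit : (Finset.range k).filter (fun r => sc r = i)
        = ((Finset.range k).filter (fun r => sd r = true ∧ sc r = i)) ∪
          ((Finset.range k).filter (fun r => sd r = false ∧ sc r = i)) := by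
      rw [← Finset.filter_or]
      apply Finset.filter_congr
      intro r _
      cases hsdr : sd r <;> simp [hsdr]
    have hdisj : Disjoint ((Finset.range k).filter (fun r => sd r = true ∧ sc r = i))
        ((Finset.range k).filter (fun r => sd r = false ∧ sc r = i)) := by
      rw [Finset.disjoint_left]
      intro r h1 h2
      rw [Finset.mem_filter] at h1 h2
      rw [h1.2.1] at h2
      exact Bool.noConfusion h2.2.1
    rw [hsplit, Finset.sum_union hdisj]
  -- ===== energy chain =====
  have hE1 : energyR G U φ = (1/2) * ∑ p ∈ P, U (φ p.1 - φ p.2) := by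
    have hstep : (∑ u : V, ∑ w : V, if G.Adj u w then U (φ u - φ w) else 0)
        = ∑ p ∈ P, U (φ p.1 - φ p.2) := by
      rw [hP, Finset.sum_filter, ← Finset.univ_product_univ, Finset.sum_product]
    simp only [energyR]
    rw [hstep]
  have hE2 : ∑ p ∈ P, U (tp p) ≤ energyR G U φ := by
    have hswapsum : ∑ p ∈ P, U (tp (Prod.swap p)) = ∑ p ∈ P, U (tp p) := by
      apply Finset.sum_nbij' (i := Prod.swap) (j := Prod.swap)
      · intro p hp
        rw [hP, Finset.mem_filter] at hp ⊢
        exact ⟨Finset.mem_univ _, hp.2.symm⟩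
      · intro p hp
        rw [hP, Finset.mem_filter] at hp ⊢
        exact ⟨Finset.mem_univ _, hp.2.symm⟩
      · intro p _; rfl
      · intro p _; rfl
      · intro p _; rfl
    have h2 : 2 * ∑ p ∈ P, U (tp p) ≤ ∑ p ∈ P, U (φ p.1 - φ p.2) := by
      have : 2 * ∑ p ∈ P, U (tp p)
          = ∑ p ∈ P, (U (tp p) + U (tp (Prod.swap p))) := by
        rw [Finset.sum_add_distrib, hswapsum]; ring
      rw [this]
      apply Finset.sum_le_sum
      intro p hp
      calc U (tp p) + U (tp (Prod.swap p)) ≤ U (tp p + tp (Prod.swap p)) :=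
            U_superadd hU hU0 (htp0 p) (htp0 _)
        _ ≤ U |φ p.1 - φ p.2| := U_mono hU hU0 hUeven
            (add_nonneg (htp0 p) (htp0 _)) (hbudget p)
        _ = U (φ p.1 - φ p.2) := hUabs _
    rw [hE1]
    linarith
  have hE3 : ∑ v : Bool, ∑ i ∈ Finset.Icc 1 l, ∑ p ∈ P, U (cc p v i) ≤ ∑ p ∈ P, U (tp p) := by
    have hcomm : ∑ v : Bool, ∑ i ∈ Finset.Icc 1 l, ∑ p ∈ P, U (cc p v i)
        = ∑ p ∈ P, ∑ v : Bool, ∑ i ∈ Finset.Icc 1 l, U (cc p v i) := by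
      rw [show (∑ v : Bool, ∑ i ∈ Finset.Icc 1 l, ∑ p ∈ P, U (cc p v i))
            = ∑ v : Bool, ∑ p ∈ P, ∑ i ∈ Finset.Icc 1 l, U (cc p v i) from
          Finset.sum_congr rfl (fun v _ => Finset.sum_comm), Finset.sum_comm]
    rw [hcomm]
    apply Finset.sum_le_sum
    intro p _
    rw [Fintype.sum_bool]
    have ht : tp p = (∑ i ∈ Finset.Icc 1 l, cc p true i)
        + (∑ i ∈ Finset.Icc 1 l, cc p false i) := by
      rw [hdecomp2 p, Finset.sum_add_distrib]
    calc (∑ i ∈ Finset.Icc 1 l, U (cc p true i)) + ∑ i ∈ Finset.Icc 1 l, U (cc p false i)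
        ≤ U (∑ i ∈ Finset.Icc 1 l, cc p true i) + U (∑ i ∈ Finset.Icc 1 l, cc p false i) :=
          add_le_add (U_superadd_sum hU hU0 _ _ (fun i _ => hcc0 p true i))
            (U_superadd_sum hU hU0 _ _ (fun i _ => hcc0 p false i))
      _ ≤ U (tp p) := by
          rw [ht]
          exact U_superadd hU hU0 (Finset.sum_nonneg (fun i _ => hcc0 p true i))
            (Finset.sum_nonneg (fun i _ => hcc0 p false i))
  have hE5 : ∀ v : Bool, ∀ i ∈ Finset.Icc 1 l,
      (Mscale G (if v then a else b) i : ℝ) *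
        U (dd v i * (mscale G (if v then a else b) i : ℝ) /
            (Mscale G (if v then a else b) i : ℝ))
      ≤ ∑ p ∈ P, U (cc p v i) := by
    intro v i hi
    set av := if v = true then a else b with hav
    set M := Mscale G av i with hM
    set m := mscale G av i with hm
    set T := (Finset.range k).filter (fun r => sd r = v ∧ sc r = i) with hT
    have hddT : dd v i = ∑ r ∈ T, δ r := rfl
    have hRHS0 : (0:ℝ) ≤ ∑ p ∈ P, U (cc p v i) :=
      Finset.sum_nonneg (fun p _ => hU0' _)
    rcases T.eq_empty_or_nonempty with hTe | hne
    · have hdd0' : dd v i = 0 := by rw [hddT, hTe, Finset.sum_empty]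
      rw [hdd0', zero_mul, zero_div, hU0, mul_zero]
      exact hRHS0
    rcases Nat.eq_zero_or_pos M with hM0 | hMpos
    · rw [hM0]
      push_cast
      rw [zero_mul]
      exact hRHS0
    -- choose the extremal index
    set rs := if v = true then T.min' hne else T.max' hne with hrs
    have hrsT : rs ∈ T := by
      rw [hrs]
      split
      · exact T.min'_mem hne
      · exact T.max'_mem hne
    have hTfacts : ∀ r ∈ T, r ∈ Finset.range k ∧ sd r = v ∧ sc r = i := by
      intro r hr
      rw [hT, Finset.mem_filter] at hr
      exact ⟨hr.1, hr.2.1, hr.2.2⟩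
    obtain ⟨hrsk, hsdrs, hscrs⟩ := hTfacts rs hrsT
    have hsub : ∀ r ∈ T, Z r ⊆ Z rs := by
      intro r hr
      obtain ⟨hrk, hsdr, hscr⟩ := hTfacts r hr
      cases hv : v with
      | true =>
        have h1 : rs ≤ r := by rw [hrs, if_pos hv]; exact T.min'_le r hr
        rw [hZtrue r (by rw [hsdr, hv]), hZtrue rs (by rw [hsdrs, hv])]
        exact Finset.compl_subset_compl.2 (hZmono rs r h1)
      | false =>
        have h1 : r ≤ rs := by rw [hrs, if_neg (by simp [hv])]; exact T.le_max' r hr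
        rw [hZfalse r (by rw [hsdr, hv]), hZfalse rs (by rw [hsdrs, hv])]
        exact hZmono r rs h1
    have hfam : ∀ r ∈ T, Z r ∈ scaleFamily G av i := by
      intro r hr
      obtain ⟨hrk, hsdr, hscr⟩ := hTfacts r hr
      have := hZmem r hrk
      rw [hsdr, hscr] at this
      exact this
    have hm_le : ∀ r ∈ T, m ≤ bdryCard G (Z r) := by
      intro r hr
      exact Nat.sInf_le (Set.mem_image_of_mem _ (hfam r hr))
    have hM_ge : inEdgesCard G (Z rs) + bdryCard G (Z rs) ≤ M := by
      apply le_csSup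
      · exact ((Set.toFinite (scaleFamily G av i)).image _).bddAbove
      · exact Set.mem_image_of_mem _ (hfam rs hrsT)
    -- the support of cc
    set K := P.filter (fun p => cc p v i ≠ 0) with hK
    have hKmem : ∀ p ∈ K, ∃ r ∈ T, p ∈ obd G (Z r) := by
      intro p hp
      rw [hK, Finset.mem_filter] at hp
      have hfib_ne : (fib p v i).Nonempty := by
        rcases (fib p v i).eq_empty_or_nonempty with he | h
        · exfalso; apply hp.2; simp only [hcc, he, Finset.sum_empty]
        · exact h
      obtain ⟨r, hr⟩ := hfib_ne
      rw [hfib, Finset.mem_filter] at hr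
      refine ⟨r, ?_, hr.2.1⟩
      rw [hT, Finset.mem_filter]
      exact ⟨hr.1, hr.2.2.1, hr.2.2.2⟩
    have horient : ∀ p, p ∈ K → Prod.swap p ∈ K → False := by
      intro p hp hps
      obtain ⟨r, hrT, hpo⟩ := hKmem p hp
      obtain ⟨r', hrT', hpo'⟩ := hKmem _ hps
      have h1 := obd_adj hpo
      have h2 := obd_adj hpo'
      simp only [Prod.fst_swap, Prod.snd_swap] at h2
      have hcomp : Z r ⊆ Z r' ∨ Z r' ⊆ Z r := by
        obtain ⟨hrk, hsdr, hscr⟩ := hTfacts r hrT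
        obtain ⟨hrk', hsdr', hscr'⟩ := hTfacts r' hrT'
        rcases le_total r r' with h | h
        · cases hv : v with
          | true =>
            right
            rw [hZtrue r (by rw [hsdr, hv]), hZtrue r' (by rw [hsdr', hv])]
            exact Finset.compl_subset_compl.2 (hZmono r r' h)
          | false =>
            left
            rw [hZfalse r (by rw [hsdr, hv]), hZfalse r' (by rw [hsdr', hv])]
            exact hZmono r r' h
        · cases hv : v with
          | true =>
            left
            rw [hZtrue r (by rw [hsdr, hv]), hZtrue r' (by rw [hsdr', hv])]
            exact Finset.compl_subset_compl.2 (hZmono r' r h)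
          | false =>
            right
            rw [hZfalse r (by rw [hsdr, hv]), hZfalse r' (by rw [hsdr', hv])]
            exact hZmono r' r h
      rcases hcomp with h | h
      · exact h2.2.2 (h h1.2.1)
      · exact h1.2.2 (h h2.2.1)
    -- counting
    set ι : V → ℕ := fun x => ((Fintype.equivFin V) x : ℕ) with hι
    have hιinj : Function.Injective ι := by
      intro x y h
      exact (Fintype.equivFin V).injective (Fin.val_injective h)
    set oin := P.filter (fun p => p.1 ∈ Z rs ∧ p.2 ∈ Z rs ∧ ι p.1 < ι p.2) with hoin
    have hoin_card : oin.card = inEdgesCard G (Z rs) := by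
      rw [← inEdges_count G (Z rs) ι hιinj, hoin, hP, Finset.filter_filter]
    have hKP : ∀ p ∈ K, G.Adj p.1 p.2 := by
      intro p hp
      rw [hK, Finset.mem_filter, hP, Finset.mem_filter] at hp
      exact hp.1.2
    have hK1 : ∀ p ∈ K, p.1 ∈ Z rs := by
      intro p hp
      obtain ⟨r, hrT, hpo⟩ := hKmem p hp
      exact hsub r hrT (obd_adj hpo).2.1
    set f : V × V → V × V := fun p =>
      if p.2 ∈ Z rs then (if ι p.1 < ι p.2 then p else Prod.swap p) else p with hf
    have hfcases : ∀ p, f p = p ∨ f p = Prod.swap p := by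
      intro p
      rw [hf]
      dsimp only
      split
      · split
        · exact Or.inl rfl
        · exact Or.inr rfl
      · exact Or.inl rfl
    have himg : ∀ p ∈ K, f p ∈ oin ∪ obd G (Z rs) := by
      intro p hp
      have hadj := hKP p hp
      have hp1 := hK1 p hp
      rw [hf]
      dsimp only
      by_cases hp2 : p.2 ∈ Z rs
      · rw [if_pos hp2]
        by_cases hlt : ι p.1 < ι p.2
        · rw [if_pos hlt]
          apply Finset.mem_union_left
          rw [hoin, Finset.mem_filter, hP, Finset.mem_filter]
          exact ⟨⟨Finset.mem_univ _, hadj⟩, hp1, hp2, hlt⟩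
        · rw [if_neg hlt]
          apply Finset.mem_union_left
          rw [hoin, Finset.mem_filter, hP, Finset.mem_filter]
          refine ⟨⟨Finset.mem_univ _, hadj.symm⟩, hp2, hp1, ?_⟩
          have hne : ι p.2 ≠ ι p.1 := fun h => hadj.ne (hιinj h.symm)
          exact lt_of_le_of_ne (not_lt.1 hlt) hne
      · rw [if_neg hp2]
        apply Finset.mem_union_right
        simp only [obd, Finset.mem_filter, Finset.mem_univ, true_and]
        exact ⟨hadj, hp1, hp2⟩
    have hinj : Set.InjOn f K := by
      intro p hp p' hp' heq
      rw [Finset.mem_coe] at hp hp'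
      rcases hfcases p with h1 | h1 <;> rcases hfcases p' with h2 | h2
      · rw [← h1, ← h2, heq]
      · rw [h1] at heq
        rw [h2] at heq
        have : p' = Prod.swap p := by
          have := congrArg Prod.swap heq
          simpa using this.symm
        exfalso
        exact horient p hp (this ▸ hp')
      · rw [h1, h2] at heq
        have : p = Prod.swap p' := by
          have := congrArg Prod.swap heq
          simpa using this
        exfalso
        exact horient p' hp' (this ▸ hp)
      · rw [h1, h2] at heq
        have := congrArg Prod.swap heq
        simpa using this
    have hKcard : (K.card : ℝ) ≤ (M : ℝ) := by
      have h1 : K.card ≤ (oin ∪ obd G (Z rs)).card :=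
        Finset.card_le_card_of_injOn f himg hinj
      have h2 : (oin ∪ obd G (Z rs)).card ≤ oin.card + (obd G (Z rs)).card :=
        Finset.card_union_le _ _
      have h3 : K.card ≤ M := by
        calc K.card ≤ oin.card + (obd G (Z rs)).card := le_trans h1 h2
          _ = inEdgesCard G (Z rs) + bdryCard G (Z rs) := by rw [hoin_card, obd_card]
          _ ≤ M := hM_ge
      exact_mod_cast h3
    -- total mass
    have hobd_subP : ∀ r, obd G (Z r) ⊆ P := by
      intro r p hp
      rw [hP, Finset.mem_filter]
      exact ⟨Finset.mem_univ _, (obd_adj hp).1⟩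
    have hccT : ∀ p, cc p v i = ∑ r ∈ T, (if p ∈ obd G (Z r) then δ r else 0) := by
      intro p
      show (∑ r ∈ fib p v i, δ r) = _
      rw [← Finset.sum_filter]
      congr 1
      simp only [hfib, hT, Finset.filter_filter]
      apply Finset.filter_congr
      intro r _
      tauto
    have hSsum : ∑ p ∈ P, cc p v i = ∑ r ∈ T, ((bdryCard G (Z r) : ℝ) * δ r) := by
      calc ∑ p ∈ P, cc p v i
          = ∑ p ∈ P, ∑ r ∈ T, (if p ∈ obd G (Z r) then δ r else 0) :=
            Finset.sum_congr rfl (fun p _ => hccT p)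
        _ = ∑ r ∈ T, ∑ p ∈ P, (if p ∈ obd G (Z r) then δ r else 0) := Finset.sum_comm
        _ = ∑ r ∈ T, ((bdryCard G (Z r) : ℝ) * δ r) := by
            apply Finset.sum_congr rfl
            intro r _
            rw [← Finset.sum_filter]
            rw [Finset.filter_mem_eq_inter, Finset.inter_eq_right.2 (hobd_subP r)]
            rw [Finset.sum_const, nsmul_eq_mul, obd_card]
    have hSlow : dd v i * (m : ℝ) ≤ ∑ p ∈ P, cc p v i := by
      rw [hSsum, hddT, Finset.sum_mul]
      apply Finset.sum_le_sum
      intro r hr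
      rw [mul_comm]
      apply mul_le_mul_of_nonneg_right _ (hδ0 r)
      exact_mod_cast hm_le r hr
    have hKsum : ∑ p ∈ K, cc p v i = ∑ p ∈ P, cc p v i := by
      rw [hK]
      exact Finset.sum_filter_ne_zero _
    have hMr : (0:ℝ) < (M : ℝ) := by exact_mod_cast hMpos
    calc (M : ℝ) * U (dd v i * (m : ℝ) / (M : ℝ))
        ≤ (M : ℝ) * U ((∑ p ∈ K, cc p v i) / (M : ℝ)) := by
          apply mul_le_mul_of_nonneg_left _ hMr.le
          apply U_mono hU hU0 hUeven
          · exact div_nonneg (mul_nonneg (hdd0 v i) (Nat.cast_nonneg m)) hMr.le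
          · rw [hKsum]
            exact (div_le_div_iff_of_pos_right hMr).2 hSlow
      _ ≤ ∑ p ∈ K, U (cc p v i) :=
          U_jensen hU hU0 K _ (fun p _ => hcc0 p v i) (M : ℝ) hKcard
      _ ≤ ∑ p ∈ P, U (cc p v i) := by
          apply Finset.sum_le_sum_of_subset_of_nonneg (Finset.filter_subset _ _)
          intro p _ _
          exact hU0' _
  -- ===== conclusion =====
  set r₀ : ℝ := ∑ i ∈ Finset.Icc 1 l,
      ((Mscale G a i : ℝ) * U (dd true i * (mscale G a i : ℝ) / (Mscale G a i : ℝ)) +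
       (Mscale G b i : ℝ) * U (dd false i * (mscale G b i : ℝ) / (Mscale G b i : ℝ))) with hr₀
  have hmem : r₀ ∈ {r : ℝ | ∃ p q : ℕ → ℝ, (∀ i, 0 ≤ p i) ∧ (∀ i, 0 ≤ q i) ∧
        (∑ i ∈ Finset.Icc 1 l, (p i + q i)) = 1 ∧
        r = ∑ i ∈ Finset.Icc 1 l,
          ((Mscale G a i : ℝ) * U (p i * (mscale G a i : ℝ) / (Mscale G a i : ℝ)) +
           (Mscale G b i : ℝ) * U (q i * (mscale G b i : ℝ) / (Mscale G b i : ℝ)))} :=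
    ⟨dd true, dd false, fun i => hdd0 true i, fun i => hdd0 false i, hsum1, rfl⟩
  have hr₀le : r₀ ≤ energyR G U φ := by
    have step : r₀ ≤ ∑ v : Bool, ∑ i ∈ Finset.Icc 1 l, ∑ p ∈ P, U (cc p v i) := by
      rw [hr₀, Fintype.sum_bool]
      rw [← Finset.sum_add_distrib]
      apply Finset.sum_le_sum
      intro i hi
      have h1 := hE5 true i hi
      have h2 := hE5 false i hi
      simp only [if_true, if_false] at h1 h2
      exact add_le_add h1 h2
    calc r₀ ≤ ∑ v : Bool, ∑ i ∈ Finset.Icc 1 l, ∑ p ∈ P, U (cc p v i) := step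
      _ ≤ ∑ p ∈ P, U (tp p) := hE3
      _ ≤ energyR G U φ := hE2
  have hbdd : BddBelow {r : ℝ | ∃ p q : ℕ → ℝ, (∀ i, 0 ≤ p i) ∧ (∀ i, 0 ≤ q i) ∧
        (∑ i ∈ Finset.Icc 1 l, (p i + q i)) = 1 ∧
        r = ∑ i ∈ Finset.Icc 1 l,
          ((Mscale G a i : ℝ) * U (p i * (mscale G a i : ℝ) / (Mscale G a i : ℝ)) +
           (Mscale G b i : ℝ) * U (q i * (mscale G b i : ℝ) / (Mscale G b i : ℝ)))} := by
    refine ⟨0, fun x hx => ?_⟩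
    obtain ⟨p, q, hp, hq, hs1, rfl⟩ := hx
    apply Finset.sum_nonneg
    intro i _
    have := hU0' (p i * (mscale G a i : ℝ) / (Mscale G a i : ℝ))
    have := hU0' (q i * (mscale G b i : ℝ) / (Mscale G b i : ℝ))
    positivity
  exact le_trans (csInf_le hbdd hmem) hr₀le
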